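/- Let (f,M) be a polymatroid, let F1,F2 be flats of (f,M) generating the modular cut 𝓜=𝓜(F1,F2), let S=F1∩F2, and assume S∉𝓜 and δ(F1,F2)=δ(𝓜)>0. Then there is a two-point extension (f2, M∪{u,v}) of (f,M) (with u,v∉M distinct) that is Ingleton-violating on this configuration: Ing_{f2}(F1,F2;{u},{v}|S) < 0. -/

import Mathlib

open scoped Classical

/-- A polymatroid on the finite ground set `M`: `f` is zero on the empty set,
nonnegative, monotone and submodular on subsets of `M`. -/
def IsPolymatroid {α : Type*} [DecidableEq α] (M : Finset α) (f : Finset α → ℝ) : Prop :=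
  f ∅ = 0 ∧
  (∀ A, A ⊆ M → 0 ≤ f A) ∧
  (∀ A B, A ⊆ B → B ⊆ M → f A ≤ f B) ∧
  (∀ A B, A ⊆ M → B ⊆ M → f (A ∪ B) + f (A ∩ B) ≤ f A + f B)

/-- `F` is a flat of the polymatroid `(f, M)`: every proper superset inside `M`
has strictly larger rank. -/
def IsFlat {α : Type*} [DecidableEq α] (M : Finset α) (f : Finset α → ℝ) (F : Finset α) : Prop :=
  F ⊆ M ∧ ∀ G, F ⊂ G → G ⊆ M → f F < f G

/-- The modular defect of a pair of subsets. -/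
def modularDefect {α : Type*} [DecidableEq α] (f : Finset α → ℝ) (A B : Finset α) : ℝ :=
  f A + f B - f (A ∩ B) - f (A ∪ B)

/-- A modular cut: a collection of flats, closed upwards among flats,
and closed under intersections of modular pairs. -/
def IsModularCut {α : Type*} [DecidableEq α] (M : Finset α) (f : Finset α → ℝ)
    (𝓜 : Set (Finset α)) : Prop :=
  (∀ F ∈ 𝓜, IsFlat M f F) ∧
  (∀ F₁ ∈ 𝓜, ∀ F₂, IsFlat M f F₂ → F₁ ⊆ F₂ → F₂ ∈ 𝓜) ∧
  (∀ F₁ ∈ 𝓜, ∀ F₂ ∈ 𝓜, modularDefect f F₁ F₂ = 0 → F₁ ∩ F₂ ∈ 𝓜)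

/-- A modular cut is principal if it is empty or the intersection of all of its
elements (taken inside the ground set `M`) is one of its elements. -/
def IsPrincipal {α : Type*} [DecidableEq α] (M : Finset α) (𝓜 : Set (Finset α)) : Prop :=
  𝓜 = ∅ ∨ (M.filter fun x => ∀ F ∈ 𝓜, x ∈ F) ∈ 𝓜

/-- `(g, N)` is an extension of the polymatroid `(f, M)`. -/
def IsExtension {α : Type*} [DecidableEq α] (M : Finset α) (f : Finset α → ℝ)
    (N : Finset α) (g : Finset α → ℝ) : Prop :=
  M ⊆ N ∧ IsPolymatroid N g ∧ ∀ A, A ⊆ M → g A = f A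

/-- `h` is an amalgam of the two extensions `(g₁, N₁)` and `(g₂, N₂)`. -/
def IsAmalgam {α : Type*} [DecidableEq α] (N₁ : Finset α) (g₁ : Finset α → ℝ)
    (N₂ : Finset α) (g₂ : Finset α → ℝ) (h : Finset α → ℝ) : Prop :=
  IsPolymatroid (N₁ ∪ N₂) h ∧ (∀ A, A ⊆ N₁ → h A = g₁ A) ∧ (∀ A, A ⊆ N₂ → h A = g₂ A)

/-- A polymatroid is sticky if every two extensions intersecting exactly
in the ground set have an amalgam. -/
def Sticky {α : Type*} [DecidableEq α] (M : Finset α) (f : Finset α → ℝ) : Prop :=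
  ∀ N₁ g₁ N₂ g₂, IsExtension M f N₁ g₁ → IsExtension M f N₂ g₂ → N₁ ∩ N₂ = M →
    ∃ h, IsAmalgam N₁ g₁ N₂ g₂ h

/-- `f(I,J|K) = f(I∪K) + f(J∪K) - f(K) - f(I∪J∪K)`. -/
def condMI {α : Type*} [DecidableEq α] (f : Finset α → ℝ) (I J K : Finset α) : ℝ :=
  f (I ∪ K) + f (J ∪ K) - f K - f (I ∪ J ∪ K)

/-- `f(Y|A) = f(Y∪A) - f(A)`. -/
def condRk {α : Type*} [DecidableEq α] (f : Finset α → ℝ) (Y A : Finset α) : ℝ :=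
  f (Y ∪ A) - f A

/-- The common information expression `Comm(A,B;Y)`. -/
def commExpr {α : Type*} [DecidableEq α] (f : Finset α → ℝ) (A B Y : Finset α) : ℝ :=
  condMI f A B Y + condRk f Y A + condRk f Y B + condRk f Y (A ∪ B)

/-- The Ingleton expression `Ing(A,B;P,Q)`. -/
def ingExpr {α : Type*} [DecidableEq α] (f : Finset α → ℝ) (A B P Q : Finset α) : ℝ :=
  -(f A + f B - f (A ∪ B)) + condMI f A B P + condMI f A B Q + (f P + f Q - f (P ∪ Q))

/-- The conditional common information expression `Comm(A,B;Y|E)`. -/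
def commExprCond {α : Type*} [DecidableEq α] (f : Finset α → ℝ) (A B Y E : Finset α) : ℝ :=
  condMI f A B (Y ∪ E) + condRk f Y (A ∪ E) + condRk f Y (B ∪ E) + condRk f Y (A ∪ B ∪ E)

/-- The conditional Ingleton expression `Ing(A,B;P,Q|E)`. -/
def ingExprCond {α : Type*} [DecidableEq α] (f : Finset α → ℝ) (A B P Q E : Finset α) : ℝ :=
  -condMI f A B E + condMI f A B (P ∪ E) + condMI f A B (Q ∪ E) + condMI f P Q E


namespace Statement17Aux

variable {α : Type*} [DecidableEq α]

/-- The closure of a set in a polymatroid. -/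
noncomputable def clo (M : Finset α) (f : Finset α → ℝ) (X : Finset α) : Finset α :=
  X ∪ M.filter (fun y => f (insert y X) = f X)

theorem clo_spec (M : Finset α) (f : Finset α → ℝ) (hf : IsPolymatroid M f)
    (X : Finset α) (hX : X ⊆ M) :
    X ⊆ clo M f X ∧ clo M f X ⊆ M ∧ f (clo M f X) = f X ∧ IsFlat M f (clo M f X) := by
  obtain ⟨hf0, hfnn, hfmono, hfsub⟩ := hf
  have hsub1 : X ⊆ clo M f X := Finset.subset_union_left
  have hsub2 : clo M f X ⊆ M :=
    Finset.union_subset hX (Finset.filter_subset _ _)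
  have key : ∀ Y : Finset α, Y ⊆ M.filter (fun y => f (insert y X) = f X) →
      f (X ∪ Y) = f X := by
    intro Y
    induction Y using Finset.induction_on with
    | empty => intro _; simp
    | @insert y Y hyY ih =>
      intro hsubY
      have hy := hsubY (Finset.mem_insert_self y Y)
      have hYf : Y ⊆ M.filter (fun y => f (insert y X) = f X) :=
        fun z hz => hsubY (Finset.mem_insert_of_mem hz)
      have hyM : y ∈ M := (Finset.mem_filter.1 hy).1
      have hyf : f (insert y X) = f X := (Finset.mem_filter.1 hy).2
      have hXY : f (X ∪ Y) = f X := ih hYf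
      have hYM : Y ⊆ M := fun z hz => (Finset.mem_filter.1 (hYf hz)).1
      have h1 : X ∪ Y ⊆ M := Finset.union_subset hX hYM
      have h2 : insert y X ⊆ M := Finset.insert_subset hyM hX
      have hsubm := hfsub (X ∪ Y) (insert y X) h1 h2
      have e1 : (X ∪ Y) ∪ insert y X = insert y (X ∪ Y) := by
        ext z; simp only [Finset.mem_union, Finset.mem_insert]; tauto
      have e2 : X ⊆ (X ∪ Y) ∩ insert y X := by
        intro z hz
        simp only [Finset.mem_inter, Finset.mem_union, Finset.mem_insert]
        exact ⟨Or.inl hz, Or.inr hz⟩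
      have h3 : (X ∪ Y) ∩ insert y X ⊆ M := fun z hz =>
        h1 (Finset.mem_inter.1 hz).1
      have hmono2 := hfmono X ((X ∪ Y) ∩ insert y X) e2 h3
      rw [e1] at hsubm
      have e3 : X ∪ insert y Y = insert y (X ∪ Y) := by
        ext z; simp only [Finset.mem_union, Finset.mem_insert]; tauto
      have hXsub : X ⊆ insert y (X ∪ Y) := fun z hz =>
        Finset.mem_insert_of_mem (Finset.mem_union_left _ hz)
      have h4 : insert y (X ∪ Y) ⊆ M := Finset.insert_subset hyM h1
      have hge : f X ≤ f (insert y (X ∪ Y)) := hfmono X _ hXsub h4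
      rw [e3]
      linarith
  have hrank : f (clo M f X) = f X := key _ Finset.Subset.rfl
  refine ⟨hsub1, hsub2, hrank, hsub2, ?_⟩
  intro G hG hGM
  obtain ⟨y, hyG, hynot⟩ := Finset.exists_of_ssubset hG
  have hyM : y ∈ M := hGM hyG
  have hyne : f (insert y X) ≠ f X := by
    intro h
    exact hynot (Finset.mem_union_right _ (Finset.mem_filter.2 ⟨hyM, h⟩))
  have hyX : X ⊆ insert y X := Finset.subset_insert _ _
  have h5 : insert y X ⊆ M := Finset.insert_subset hyM hX
  have hle : f X ≤ f (insert y X) := hfmono X _ hyX h5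
  have hlt : f X < f (insert y X) := lt_of_le_of_ne hle (Ne.symm hyne)
  have h6 : insert y X ⊆ G :=
    Finset.insert_subset hyG (Finset.Subset.trans hsub1 hG.1)
  have := hfmono (insert y X) G h6 hGM
  rw [hrank]
  linarith

/-- The two-point extension function. -/
noncomputable def twoExt (M : Finset α) (f gt : Finset α → ℝ) (c : ℝ) (u v : α) :
    Finset α → ℝ :=
  fun A => if u ∈ A ∧ v ∈ A then c else if u ∈ A ∨ v ∈ A then gt (A ∩ M) else f (A ∩ M)

theorem twoExt_val2 (M : Finset α) (f gt : Finset α → ℝ) (c : ℝ) (u v : α)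
    {A : Finset α} (h1 : u ∈ A) (h2 : v ∈ A) : twoExt M f gt c u v A = c :=
  if_pos ⟨h1, h2⟩

theorem twoExt_val1 (M : Finset α) (f gt : Finset α → ℝ) (c : ℝ) (u v : α)
    {A : Finset α} (h1 : u ∈ A ∨ v ∈ A) (h2 : ¬(u ∈ A ∧ v ∈ A)) :
    twoExt M f gt c u v A = gt (A ∩ M) := by
  unfold twoExt; rw [if_neg h2, if_pos h1]

theorem twoExt_val0 (M : Finset α) (f gt : Finset α → ℝ) (c : ℝ) (u v : α)
    {A : Finset α} (h1 : u ∉ A) (h2 : v ∉ A) :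
    twoExt M f gt c u v A = f (A ∩ M) := by
  unfold twoExt
  rw [if_neg (fun h => h1 h.1), if_neg (fun h => h.elim h1 h2)]

theorem twoExt_poly (M : Finset α) (f gt : Finset α → ℝ) (c : ℝ) (u v : α)
    (hf : IsPolymatroid M f)
    (A2 : ∀ X Y : Finset α, X ⊆ Y → Y ⊆ M → gt X ≤ gt Y)
    (A3 : ∀ X Y : Finset α, X ⊆ M → Y ⊆ M → gt (X ∪ Y) + gt (X ∩ Y) ≤ gt X + gt Y)
    (A4 : ∀ X Y : Finset α, X ⊆ M → Y ⊆ M → gt (X ∪ Y) + f (X ∩ Y) ≤ gt Y + f X)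
    (A5 : ∀ X : Finset α, X ⊆ M → f X ≤ gt X)
    (A6 : ∀ X : Finset α, X ⊆ M → gt X ≤ c)
    (A7 : ∀ X Y : Finset α, X ⊆ M → Y ⊆ M → c + f (X ∩ Y) ≤ gt X + gt Y) :
    IsPolymatroid (insert u (insert v M)) (twoExt M f gt c u v) := by
  obtain ⟨hf0, hfnn, hfmono, hfsub⟩ := hf
  have hiM : ∀ A : Finset α, A ∩ M ⊆ M := fun A => Finset.inter_subset_right
  have hgtnn : ∀ X : Finset α, X ⊆ M → (0:ℝ) ≤ gt X := fun X hX =>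
    le_trans (hfnn X hX) (A5 X hX)
  have hcnn : (0:ℝ) ≤ c := le_trans (hgtnn ∅ (Finset.empty_subset M)) (A6 ∅ (Finset.empty_subset M))
  have eunion : ∀ A B : Finset α, (A ∪ B) ∩ M = (A ∩ M) ∪ (B ∩ M) := by
    intro A B; ext z; simp only [Finset.mem_union, Finset.mem_inter]; tauto
  have einter : ∀ A B : Finset α, (A ∩ B) ∩ M = (A ∩ M) ∩ (B ∩ M) := by
    intro A B; ext z; simp only [Finset.mem_union, Finset.mem_inter]; tauto
  refine ⟨?_, ?_, ?_, ?_⟩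
  · rw [twoExt_val0 M f gt c u v (Finset.notMem_empty u) (Finset.notMem_empty v),
      Finset.empty_inter, hf0]
  · intro A _
    by_cases huA : u ∈ A <;> by_cases hvA : v ∈ A
    · rw [twoExt_val2 M f gt c u v huA hvA]; exact hcnn
    · rw [twoExt_val1 M f gt c u v (Or.inl huA) (fun h => hvA h.2)]
      exact hgtnn _ (hiM A)
    · rw [twoExt_val1 M f gt c u v (Or.inr hvA) (fun h => huA h.1)]
      exact hgtnn _ (hiM A)
    · rw [twoExt_val0 M f gt c u v huA hvA]; exact hfnn _ (hiM A)
  · -- monotone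
    intro A B hAB _
    have hXY : A ∩ M ⊆ B ∩ M := fun z hz =>
      Finset.mem_inter.2 ⟨hAB (Finset.mem_inter.1 hz).1, (Finset.mem_inter.1 hz).2⟩
    by_cases huA : u ∈ A <;> by_cases hvA : v ∈ A <;>
      by_cases huB : u ∈ B <;> by_cases hvB : v ∈ B
    all_goals first
      | (exact absurd (hAB huA) huB)
      | (exact absurd (hAB hvA) hvB)
      | skip
    · rw [twoExt_val2 M f gt c u v huA hvA, twoExt_val2 M f gt c u v huB hvB]
    · rw [twoExt_val1 M f gt c u v (Or.inl huA) (fun h => hvA h.2),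
        twoExt_val2 M f gt c u v huB hvB]
      exact A6 _ (hiM A)
    · rw [twoExt_val1 M f gt c u v (Or.inl huA) (fun h => hvA h.2),
        twoExt_val1 M f gt c u v (Or.inl huB) (fun h => hvB h.2)]
      exact A2 _ _ hXY (hiM B)
    · rw [twoExt_val1 M f gt c u v (Or.inr hvA) (fun h => huA h.1),
        twoExt_val2 M f gt c u v huB hvB]
      exact A6 _ (hiM A)
    · rw [twoExt_val1 M f gt c u v (Or.inr hvA) (fun h => huA h.1),
        twoExt_val1 M f gt c u v (Or.inr hvB) (fun h => huB h.1)]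
      exact A2 _ _ hXY (hiM B)
    · rw [twoExt_val0 M f gt c u v huA hvA, twoExt_val2 M f gt c u v huB hvB]
      exact le_trans (le_trans (hfmono _ _ hXY (hiM B)) (A5 _ (hiM B))) (A6 _ (hiM B))
    · rw [twoExt_val0 M f gt c u v huA hvA,
        twoExt_val1 M f gt c u v (Or.inl huB) (fun h => hvB h.2)]
      exact le_trans (hfmono _ _ hXY (hiM B)) (A5 _ (hiM B))
    · rw [twoExt_val0 M f gt c u v huA hvA,
        twoExt_val1 M f gt c u v (Or.inr hvB) (fun h => huB h.1)]
      exact le_trans (hfmono _ _ hXY (hiM B)) (A5 _ (hiM B))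
    · rw [twoExt_val0 M f gt c u v huA hvA, twoExt_val0 M f gt c u v huB hvB]
      exact hfmono _ _ hXY (hiM B)
  · -- submodular
    intro A B _ _
    have hXM := hiM A
    have hYM := hiM B
    have hiXY : (A ∩ M) ∩ (B ∩ M) ⊆ M := fun z hz => hXM (Finset.mem_inter.1 hz).1
    have huXY : (A ∩ M) ∪ (B ∩ M) ⊆ M := Finset.union_subset hXM hYM
    by_cases huA : u ∈ A <;> by_cases hvA : v ∈ A <;>
      by_cases huB : u ∈ B <;> by_cases hvB : v ∈ B
    -- 16 cases
    · -- (uv, uv)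
      rw [twoExt_val2 M f gt c u v huA hvA, twoExt_val2 M f gt c u v huB hvB,
        twoExt_val2 M f gt c u v (Finset.mem_union_left _ huA) (Finset.mem_union_left _ hvA),
        twoExt_val2 M f gt c u v (Finset.mem_inter.2 ⟨huA, huB⟩) (Finset.mem_inter.2 ⟨hvA, hvB⟩)]
    · -- (uv, u)
      rw [twoExt_val2 M f gt c u v huA hvA,
        twoExt_val1 M f gt c u v (Or.inl huB) (fun h => hvB h.2),
        twoExt_val2 M f gt c u v (Finset.mem_union_left _ huA) (Finset.mem_union_left _ hvA),
        twoExt_val1 M f gt c u v (Or.inl (Finset.mem_inter.2 ⟨huA, huB⟩))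
          (fun h => hvB (Finset.mem_inter.1 h.2).2), einter]
      have := A2 ((A ∩ M) ∩ (B ∩ M)) (B ∩ M) Finset.inter_subset_right hYM
      linarith
    · -- (uv, v)
      rw [twoExt_val2 M f gt c u v huA hvA,
        twoExt_val1 M f gt c u v (Or.inr hvB) (fun h => huB h.1),
        twoExt_val2 M f gt c u v (Finset.mem_union_left _ huA) (Finset.mem_union_left _ hvA),
        twoExt_val1 M f gt c u v (Or.inr (Finset.mem_inter.2 ⟨hvA, hvB⟩))
          (fun h => huB (Finset.mem_inter.1 h.1).2), einter]
      have := A2 ((A ∩ M) ∩ (B ∩ M)) (B ∩ M) Finset.inter_subset_right hYM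
      linarith
    · -- (uv, none)
      rw [twoExt_val2 M f gt c u v huA hvA,
        twoExt_val0 M f gt c u v huB hvB,
        twoExt_val2 M f gt c u v (Finset.mem_union_left _ huA) (Finset.mem_union_left _ hvA),
        twoExt_val0 M f gt c u v (fun h => huB (Finset.mem_inter.1 h).2)
          (fun h => hvB (Finset.mem_inter.1 h).2), einter]
      have := hfmono ((A ∩ M) ∩ (B ∩ M)) (B ∩ M) Finset.inter_subset_right hYM
      linarith
    · -- (u, uv)
      rw [twoExt_val2 M f gt c u v huB hvB,
        twoExt_val1 M f gt c u v (Or.inl huA) (fun h => hvA h.2),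
        twoExt_val2 M f gt c u v (Finset.mem_union_right _ huB) (Finset.mem_union_right _ hvB),
        twoExt_val1 M f gt c u v (Or.inl (Finset.mem_inter.2 ⟨huA, huB⟩))
          (fun h => hvA (Finset.mem_inter.1 h.2).1), einter]
      have := A2 ((A ∩ M) ∩ (B ∩ M)) (A ∩ M) Finset.inter_subset_left hXM
      linarith
    · -- (u, u)
      rw [twoExt_val1 M f gt c u v (Or.inl huA) (fun h => hvA h.2),
        twoExt_val1 M f gt c u v (Or.inl huB) (fun h => hvB h.2),
        twoExt_val1 M f gt c u v (Or.inl (Finset.mem_union_left _ huA))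
          (fun h => (Finset.mem_union.1 h.2).elim hvA hvB),
        twoExt_val1 M f gt c u v (Or.inl (Finset.mem_inter.2 ⟨huA, huB⟩))
          (fun h => hvA (Finset.mem_inter.1 h.2).1), eunion, einter]
      exact A3 _ _ hXM hYM
    · -- (u, v)
      rw [twoExt_val1 M f gt c u v (Or.inl huA) (fun h => hvA h.2),
        twoExt_val1 M f gt c u v (Or.inr hvB) (fun h => huB h.1),
        twoExt_val2 M f gt c u v (Finset.mem_union_left _ huA) (Finset.mem_union_right _ hvB),
        twoExt_val0 M f gt c u v (fun h => huB (Finset.mem_inter.1 h).2)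
          (fun h => hvA (Finset.mem_inter.1 h).1), einter]
      exact A7 _ _ hXM hYM
    · -- (u, none)
      rw [twoExt_val1 M f gt c u v (Or.inl huA) (fun h => hvA h.2),
        twoExt_val0 M f gt c u v huB hvB,
        twoExt_val1 M f gt c u v (Or.inl (Finset.mem_union_left _ huA))
          (fun h => (Finset.mem_union.1 h.2).elim hvA hvB),
        twoExt_val0 M f gt c u v (fun h => huB (Finset.mem_inter.1 h).2)
          (fun h => hvA (Finset.mem_inter.1 h).1), eunion, einter]
      have := A4 (B ∩ M) (A ∩ M) hYM hXM
      rw [Finset.union_comm (B ∩ M) (A ∩ M), Finset.inter_comm (B ∩ M) (A ∩ M)] at this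
      linarith
    · -- (v, uv)
      rw [twoExt_val2 M f gt c u v huB hvB,
        twoExt_val1 M f gt c u v (Or.inr hvA) (fun h => huA h.1),
        twoExt_val2 M f gt c u v (Finset.mem_union_right _ huB) (Finset.mem_union_right _ hvB),
        twoExt_val1 M f gt c u v (Or.inr (Finset.mem_inter.2 ⟨hvA, hvB⟩))
          (fun h => huA (Finset.mem_inter.1 h.1).1), einter]
      have := A2 ((A ∩ M) ∩ (B ∩ M)) (A ∩ M) Finset.inter_subset_left hXM
      linarith
    · -- (v, u)
      rw [twoExt_val1 M f gt c u v (Or.inr hvA) (fun h => huA h.1),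
        twoExt_val1 M f gt c u v (Or.inl huB) (fun h => hvB h.2),
        twoExt_val2 M f gt c u v (Finset.mem_union_right _ huB) (Finset.mem_union_left _ hvA),
        twoExt_val0 M f gt c u v (fun h => huA (Finset.mem_inter.1 h).1)
          (fun h => hvB (Finset.mem_inter.1 h).2), einter]
      exact A7 _ _ hXM hYM
    · -- (v, v)
      rw [twoExt_val1 M f gt c u v (Or.inr hvA) (fun h => huA h.1),
        twoExt_val1 M f gt c u v (Or.inr hvB) (fun h => huB h.1),
        twoExt_val1 M f gt c u v (Or.inr (Finset.mem_union_left _ hvA))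
          (fun h => (Finset.mem_union.1 h.1).elim huA huB),
        twoExt_val1 M f gt c u v (Or.inr (Finset.mem_inter.2 ⟨hvA, hvB⟩))
          (fun h => huA (Finset.mem_inter.1 h.1).1), eunion, einter]
      exact A3 _ _ hXM hYM
    · -- (v, none)
      rw [twoExt_val1 M f gt c u v (Or.inr hvA) (fun h => huA h.1),
        twoExt_val0 M f gt c u v huB hvB,
        twoExt_val1 M f gt c u v (Or.inr (Finset.mem_union_left _ hvA))
          (fun h => (Finset.mem_union.1 h.1).elim huA huB),
        twoExt_val0 M f gt c u v (fun h => huA (Finset.mem_inter.1 h).1)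
          (fun h => hvB (Finset.mem_inter.1 h).2), eunion, einter]
      have := A4 (B ∩ M) (A ∩ M) hYM hXM
      rw [Finset.union_comm (B ∩ M) (A ∩ M), Finset.inter_comm (B ∩ M) (A ∩ M)] at this
      linarith
    · -- (none, uv)
      rw [twoExt_val0 M f gt c u v huA hvA,
        twoExt_val2 M f gt c u v huB hvB,
        twoExt_val2 M f gt c u v (Finset.mem_union_right _ huB) (Finset.mem_union_right _ hvB),
        twoExt_val0 M f gt c u v (fun h => huA (Finset.mem_inter.1 h).1)
          (fun h => hvA (Finset.mem_inter.1 h).1), einter]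
      have := hfmono ((A ∩ M) ∩ (B ∩ M)) (A ∩ M) Finset.inter_subset_left hXM
      linarith
    · -- (none, u)
      rw [twoExt_val0 M f gt c u v huA hvA,
        twoExt_val1 M f gt c u v (Or.inl huB) (fun h => hvB h.2),
        twoExt_val1 M f gt c u v (Or.inl (Finset.mem_union_right _ huB))
          (fun h => (Finset.mem_union.1 h.2).elim hvA hvB),
        twoExt_val0 M f gt c u v (fun h => huA (Finset.mem_inter.1 h).1)
          (fun h => hvA (Finset.mem_inter.1 h).1), eunion, einter]
      have := A4 (A ∩ M) (B ∩ M) hXM hYM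
      linarith
    · -- (none, v)
      rw [twoExt_val0 M f gt c u v huA hvA,
        twoExt_val1 M f gt c u v (Or.inr hvB) (fun h => huB h.1),
        twoExt_val1 M f gt c u v (Or.inr (Finset.mem_union_right _ hvB))
          (fun h => (Finset.mem_union.1 h.1).elim huA huB),
        twoExt_val0 M f gt c u v (fun h => huA (Finset.mem_inter.1 h).1)
          (fun h => hvA (Finset.mem_inter.1 h).1), eunion, einter]
      have := A4 (A ∩ M) (B ∩ M) hXM hYM
      linarith
    · -- (none, none)
      rw [twoExt_val0 M f gt c u v huA hvA, twoExt_val0 M f gt c u v huB hvB,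
        twoExt_val0 M f gt c u v (fun h => (Finset.mem_union.1 h).elim huA huB)
          (fun h => (Finset.mem_union.1 h).elim hvA hvB),
        twoExt_val0 M f gt c u v (fun h => huA (Finset.mem_inter.1 h).1)
          (fun h => hvA (Finset.mem_inter.1 h).1), eunion, einter]
      exact hfsub _ _ hXM hYM

end Statement17Aux

set_option maxHeartbeats 1600000

/-- Let `F₁, F₂` be flats generating the modular cut `𝓜`, let
`S = F₁ ∩ F₂ ∉ 𝓜`, and suppose `δ(F₁,F₂) = δ(𝓜) > 0`.  Then `(f, M)` has a
two-point extension `(f₂, M ∪ {u,v})` which is Ingleton-violating on this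
configuration: `Ing_{f₂}(F₁, F₂; {u}, {v} | S) < 0`. -/
theorem statement_17 {α : Type*} [DecidableEq α] [Infinite α]
    (M : Finset α) (f : Finset α → ℝ) (hf : IsPolymatroid M f)
    (F₁ F₂ : Finset α) (hF₁ : IsFlat M f F₁) (hF₂ : IsFlat M f F₂)
    (𝓜 : Set (Finset α)) (h𝓜 : IsModularCut M f 𝓜)
    (hF₁mem : F₁ ∈ 𝓜) (hF₂mem : F₂ ∈ 𝓜)
    (hgen : ∀ 𝓝 : Set (Finset α), IsModularCut M f 𝓝 → F₁ ∈ 𝓝 → F₂ ∈ 𝓝 → 𝓜 ⊆ 𝓝)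
    (hS : F₁ ∩ F₂ ∉ 𝓜)
    (hδpos : 0 < modularDefect f F₁ F₂)
    (hmin : ∀ G₁ ∈ 𝓜, ∀ G₂ ∈ 𝓜, G₁ ∩ G₂ ∉ 𝓜 →
      modularDefect f F₁ F₂ ≤ modularDefect f G₁ G₂) :
    ∃ u v : α, u ≠ v ∧ u ∉ M ∧ v ∉ M ∧ ∃ f₂ : Finset α → ℝ,
      IsPolymatroid (insert u (insert v M)) f₂ ∧
      (∀ A, A ⊆ M → f₂ A = f A) ∧
      ingExprCond f₂ F₁ F₂ {u} {v} (F₁ ∩ F₂) < 0 := by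
  classical
  obtain ⟨u, hu⟩ := Infinite.exists_notMem_finset M
  obtain ⟨v, hv'⟩ := Infinite.exists_notMem_finset (insert u M)
  have huv : u ≠ v := fun h => hv' (h ▸ Finset.mem_insert_self u M)
  have hv : v ∉ M := fun h => hv' (Finset.mem_insert_of_mem h)
  set S := F₁ ∩ F₂ with hSdef
  set δr := modularDefect f F₁ F₂ with hδdef
  have hf0 := hf.1
  have hfnn := hf.2.1
  have hfmono := hf.2.2.1
  have hfsub := hf.2.2.2
  have hF₁M : F₁ ⊆ M := hF₁.1
  have hF₂M : F₂ ⊆ M := hF₂.1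
  have hS₁ : S ⊆ F₁ := Finset.inter_subset_left
  have hS₂ : S ⊆ F₂ := Finset.inter_subset_right
  have hSM : S ⊆ M := hS₁.trans hF₁M
  have hUM : F₁ ∪ F₂ ⊆ M := Finset.union_subset hF₁M hF₂M
  have hδeq : δr = f F₁ + f F₂ - f S - f (F₁ ∪ F₂) := by
    rw [hδdef, modularDefect, ← hSdef]
  -- the family of cut members as a Finset
  set 𝓕 : Finset (Finset α) := insert F₁ ((M.powerset).filter (fun F => F ∈ 𝓜)) with h𝓕def
  have hne : 𝓕.Nonempty := ⟨F₁, Finset.mem_insert_self _ _⟩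
  have h𝓕 : ∀ F ∈ 𝓕, F ∈ 𝓜 ∧ F ⊆ M := by
    intro F hF
    rcases Finset.mem_insert.1 hF with rfl | hF
    · exact ⟨hF₁mem, hF₁M⟩
    · exact ⟨(Finset.mem_filter.1 hF).2, Finset.mem_powerset.1 (Finset.mem_filter.1 hF).1⟩
  have h𝓕mem : ∀ F, F ∈ 𝓜 → F ∈ 𝓕 := by
    intro F hF
    exact Finset.mem_insert_of_mem
      (Finset.mem_filter.2 ⟨Finset.mem_powerset.2 (h𝓜.1 F hF).1, hF⟩)
  have hF₂𝓕 : F₂ ∈ 𝓕 := h𝓕mem F₂ hF₂mem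
  -- the hat function
  set hh : Finset α → ℝ :=
    fun X => min (f (X ∪ S) + δr) (𝓕.inf' hne fun F => f (X ∪ S ∪ F)) with hhdef
  have hhub1 : ∀ X : Finset α, hh X ≤ f (X ∪ S) + δr := fun X => min_le_left _ _
  have hhub2 : ∀ (X F : Finset α), F ∈ 𝓕 → hh X ≤ f (X ∪ S ∪ F) := fun X F hF =>
    le_trans (min_le_right _ _) (Finset.inf'_le _ hF)
  -- flat absorption
  have habs : ∀ G, IsFlat M f G → ∀ X : Finset α, X ⊆ M → f (X ∪ G) ≤ f G → X ⊆ G := by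
    intro G hG X hXM hle
    by_contra hnot
    have hne2 : G ≠ X ∪ G := fun h => hnot (h ▸ Finset.subset_union_left)
    have hss : G ⊂ X ∪ G := Finset.ssubset_iff_subset_ne.2 ⟨Finset.subset_union_right, hne2⟩
    have := hG.2 (X ∪ G) hss (Finset.union_subset hXM hG.1)
    linarith
  -- Key claim: every cut member is far from S
  have hK : ∀ F ∈ 𝓕, f S + δr ≤ f (S ∪ F) := by
    intro F hF𝓕
    obtain ⟨hF𝓜, hFM⟩ := h𝓕 F hF𝓕
    have hSFM : S ∪ F ⊆ M := Finset.union_subset hSM hFM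
    obtain ⟨hsup, hGM, hGrank, hGflat⟩ := Statement17Aux.clo_spec M f hf (S ∪ F) hSFM
    have hG𝓜 : Statement17Aux.clo M f (S ∪ F) ∈ 𝓜 :=
      h𝓜.2.1 F hF𝓜 _ hGflat (Finset.Subset.trans Finset.subset_union_right hsup)
    set G := Statement17Aux.clo M f (S ∪ F)
    have hSG : S ⊆ G := Finset.Subset.trans Finset.subset_union_left hsup
    rw [← hGrank]
    by_cases hH : F₁ ∩ G ∈ 𝓜
    · have hHF₂ : (F₁ ∩ G) ∩ F₂ = S := by
        apply Finset.Subset.antisymm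
        · intro z hz
          rw [hSdef]
          exact Finset.mem_inter.2
            ⟨(Finset.mem_inter.1 (Finset.mem_inter.1 hz).1).1, (Finset.mem_inter.1 hz).2⟩
        · intro z hz
          exact Finset.mem_inter.2 ⟨Finset.mem_inter.2 ⟨hS₁ hz, hSG hz⟩, hS₂ hz⟩
      have hd := hmin (F₁ ∩ G) hH F₂ hF₂mem (by rw [hHF₂]; exact hS)
      rw [modularDefect, hHF₂] at hd
      have h1 : f F₂ ≤ f ((F₁ ∩ G) ∪ F₂) :=
        hfmono _ _ Finset.subset_union_right
          (Finset.union_subset (fun z hz => hF₁M (Finset.mem_inter.1 hz).1) hF₂M)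
      have h2 : f (F₁ ∩ G) ≤ f G := hfmono _ _ Finset.inter_subset_right hGM
      linarith
    · have hd := hmin F₁ hF₁mem G hG𝓜 hH
      rw [modularDefect] at hd
      have h1 : f S ≤ f (F₁ ∩ G) :=
        hfmono _ _ (fun z hz => Finset.mem_inter.2 ⟨hS₁ hz, hSG hz⟩)
          (fun z hz => hF₁M (Finset.mem_inter.1 hz).1)
      have h2 : f F₁ ≤ f (F₁ ∪ G) :=
        hfmono _ _ Finset.subset_union_left (Finset.union_subset hF₁M hGM)
      linarith
  -- Key claim 2 : no cut member above S has rank exactly f S + δ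
  have hK2 : ∀ W, W ∈ 𝓜 → S ⊆ W → f W = f S + δr → False := by
    intro W hW𝓜 hSW hfW
    have hWM : W ⊆ M := (h𝓜.1 W hW𝓜).1
    by_cases hH : W ∩ F₁ ∈ 𝓜
    · have hHS : (W ∩ F₁) ∩ F₂ = S := by
        apply Finset.Subset.antisymm
        · intro z hz
          rw [hSdef]
          exact Finset.mem_inter.2
            ⟨(Finset.mem_inter.1 (Finset.mem_inter.1 hz).1).2, (Finset.mem_inter.1 hz).2⟩
        · intro z hz
          exact Finset.mem_inter.2 ⟨Finset.mem_inter.2 ⟨hSW hz, hS₁ hz⟩, hS₂ hz⟩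
      have hd := hmin (W ∩ F₁) hH F₂ hF₂mem (by rw [hHS]; exact hS)
      rw [modularDefect, hHS] at hd
      have hWF₁M : W ∩ F₁ ⊆ M := fun z hz => hWM (Finset.mem_inter.1 hz).1
      have h2 : f (W ∩ F₁) ≤ f W := hfmono _ _ Finset.inter_subset_left hWM
      have h3 : f ((W ∩ F₁) ∪ F₂) ≤ f F₂ := by linarith
      have h4 : W ∩ F₁ ⊆ F₂ := habs F₂ hF₂ (W ∩ F₁) hWF₁M h3
      have h5 : W ∩ F₁ ⊆ S := by
        intro z hz
        rw [hSdef]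
        exact Finset.mem_inter.2 ⟨(Finset.mem_inter.1 hz).2, h4 hz⟩
      have h6 : f (W ∩ F₁) ≤ f S := hfmono _ _ h5 hSM
      have h7 : f F₂ ≤ f ((W ∩ F₁) ∪ F₂) :=
        hfmono _ _ Finset.subset_union_right (Finset.union_subset hWF₁M hF₂M)
      linarith
    · have hd := hmin W hW𝓜 F₁ hF₁mem hH
      rw [modularDefect] at hd
      have h1 : f S ≤ f (W ∩ F₁) :=
        hfmono _ _ (fun z hz => Finset.mem_inter.2 ⟨hSW hz, hS₁ hz⟩)
          (fun z hz => hWM (Finset.mem_inter.1 hz).1)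
      have h2 : f (W ∪ F₁) ≤ f F₁ := by linarith
      have h3 : W ⊆ F₁ := habs F₁ hF₁ W hWM h2
      have hWF₂ : W ∩ F₂ = S := by
        apply Finset.Subset.antisymm
        · intro z hz
          rw [hSdef]
          exact Finset.mem_inter.2 ⟨h3 (Finset.mem_inter.1 hz).1, (Finset.mem_inter.1 hz).2⟩
        · intro z hz
          exact Finset.mem_inter.2 ⟨hSW hz, hS₂ hz⟩
      have hd₂ := hmin W hW𝓜 F₂ hF₂mem (by rw [hWF₂]; exact hS)
      rw [modularDefect, hWF₂] at hd₂
      have h4 : f (W ∪ F₂) ≤ f F₂ := by linarith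
      have h5 : W ⊆ F₂ := habs F₂ hF₂ W hWM h4
      have h6 : W = S := by
        apply Finset.Subset.antisymm
        · intro z hz
          rw [hSdef]
          exact Finset.mem_inter.2 ⟨h3 hz, h5 hz⟩
        · exact hSW
      exact hS (h6 ▸ hW𝓜)
  -- monotonicity of hh
  have hhmono : ∀ X Y : Finset α, X ⊆ Y → Y ⊆ M → hh X ≤ hh Y := by
    intro X Y hXY hYM
    apply le_min
    · refine le_trans (hhub1 X) (add_le_add_left ?_ _)
      exact hfmono _ _ (Finset.union_subset_union hXY Finset.Subset.rfl)
        (Finset.union_subset hYM hSM)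
    · apply Finset.le_inf'
      intro F hF
      refine le_trans (hhub2 X F hF) ?_
      exact hfmono _ _
        (Finset.union_subset_union (Finset.union_subset_union hXY Finset.Subset.rfl)
          Finset.Subset.rfl)
        (Finset.union_subset (Finset.union_subset hYM hSM) (h𝓕 F hF).2)
  -- hh is at least f
  have hhgef : ∀ X : Finset α, X ⊆ M → f X ≤ hh X := by
    intro X hXM
    apply le_min
    · have := hfmono X (X ∪ S) Finset.subset_union_left (Finset.union_subset hXM hSM)
      linarith
    · apply Finset.le_inf'
      intro F hF
      exact hfmono X _ (Finset.subset_union_left.trans Finset.subset_union_left)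
        (Finset.union_subset (Finset.union_subset hXM hSM) (h𝓕 F hF).2)
  -- cross submodularity (G5)
  have hhcross : ∀ X Y : Finset α, X ⊆ M → Y ⊆ M →
      hh (X ∪ Y) + f (X ∩ Y) ≤ hh Y + f X := by
    intro X Y hXM hYM
    rcases le_total (f (Y ∪ S) + δr) (𝓕.inf' hne fun F => f (Y ∪ S ∪ F)) with hc | hc
    · have hY1 : hh Y = f (Y ∪ S) + δr := min_eq_left hc
      have hb : hh (X ∪ Y) ≤ f ((X ∪ Y) ∪ S) + δr := hhub1 _
      have hsubm := hfsub X (Y ∪ S) hXM (Finset.union_subset hYM hSM)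
      have e1 : X ∪ (Y ∪ S) = (X ∪ Y) ∪ S := by
        ext z; simp only [Finset.mem_union]; tauto
      have e2 : X ∩ Y ⊆ X ∩ (Y ∪ S) := by
        intro z hz
        simp only [Finset.mem_inter, Finset.mem_union] at hz ⊢; tauto
      have h3 : f (X ∩ Y) ≤ f (X ∩ (Y ∪ S)) :=
        hfmono _ _ e2 (fun z hz => hXM (Finset.mem_inter.1 hz).1)
      rw [e1] at hsubm
      linarith
    · obtain ⟨F₀, hF₀, hEq⟩ := Finset.exists_mem_eq_inf' hne (fun F => f (Y ∪ S ∪ F))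
      have hY1 : hh Y = f (Y ∪ S ∪ F₀) := by simp only [hhdef]; rw [min_eq_right hc, hEq]
      have hb : hh (X ∪ Y) ≤ f ((X ∪ Y) ∪ S ∪ F₀) := hhub2 _ F₀ hF₀
      have hYSF : Y ∪ S ∪ F₀ ⊆ M :=
        Finset.union_subset (Finset.union_subset hYM hSM) (h𝓕 F₀ hF₀).2
      have hsubm := hfsub X (Y ∪ S ∪ F₀) hXM hYSF
      have e1 : X ∪ (Y ∪ S ∪ F₀) = (X ∪ Y) ∪ S ∪ F₀ := by
        ext z; simp only [Finset.mem_union]; tauto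
      have e2 : X ∩ Y ⊆ X ∩ (Y ∪ S ∪ F₀) := by
        intro z hz
        simp only [Finset.mem_inter, Finset.mem_union] at hz ⊢; tauto
      have h3 : f (X ∩ Y) ≤ f (X ∩ (Y ∪ S ∪ F₀)) :=
        hfmono _ _ e2 (fun z hz => hXM (Finset.mem_inter.1 hz).1)
      rw [e1] at hsubm
      linarith
  -- submodularity of hh (G3)
  have hhsub : ∀ X Y : Finset α, X ⊆ M → Y ⊆ M →
      hh (X ∪ Y) + hh (X ∩ Y) ≤ hh X + hh Y := by
    have N1 : ∀ X Y : Finset α, X ⊆ M → Y ⊆ M → hh X = f (X ∪ S) + δr →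
        hh (X ∪ Y) + hh (X ∩ Y) ≤ hh X + hh Y := by
      intro X Y hXM hYM hX1
      rcases le_total (f (Y ∪ S) + δr) (𝓕.inf' hne fun F => f (Y ∪ S ∪ F)) with hc | hc
      · have hY1 : hh Y = f (Y ∪ S) + δr := min_eq_left hc
        have hb1 : hh (X ∪ Y) ≤ f ((X ∪ Y) ∪ S) + δr := hhub1 _
        have hb2 : hh (X ∩ Y) ≤ f ((X ∩ Y) ∪ S) + δr := hhub1 _
        have hsubm := hfsub (X ∪ S) (Y ∪ S) (Finset.union_subset hXM hSM)
          (Finset.union_subset hYM hSM)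
        have e1 : (X ∪ S) ∪ (Y ∪ S) = (X ∪ Y) ∪ S := by
          ext z; simp only [Finset.mem_union]; tauto
        have e2 : (X ∩ Y) ∪ S ⊆ (X ∪ S) ∩ (Y ∪ S) := by
          intro z hz
          simp only [Finset.mem_inter, Finset.mem_union] at hz ⊢; tauto
        have h3 : f ((X ∩ Y) ∪ S) ≤ f ((X ∪ S) ∩ (Y ∪ S)) :=
          hfmono _ _ e2 (fun z hz => (Finset.union_subset hXM hSM) (Finset.mem_inter.1 hz).1)
        rw [e1] at hsubm
        linarith
      · obtain ⟨F₀, hF₀, hEq⟩ := Finset.exists_mem_eq_inf' hne (fun F => f (Y ∪ S ∪ F))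
        have hY1 : hh Y = f (Y ∪ S ∪ F₀) := by simp only [hhdef]; rw [min_eq_right hc, hEq]
        have hb1 : hh (X ∪ Y) ≤ f ((X ∪ Y) ∪ S ∪ F₀) := hhub2 _ F₀ hF₀
        have hb2 : hh (X ∩ Y) ≤ f ((X ∩ Y) ∪ S) + δr := hhub1 _
        have hYSF : Y ∪ S ∪ F₀ ⊆ M :=
          Finset.union_subset (Finset.union_subset hYM hSM) (h𝓕 F₀ hF₀).2
        have hsubm := hfsub (X ∪ S) (Y ∪ S ∪ F₀) (Finset.union_subset hXM hSM) hYSF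
        have e1 : (X ∪ S) ∪ (Y ∪ S ∪ F₀) = (X ∪ Y) ∪ S ∪ F₀ := by
          ext z; simp only [Finset.mem_union]; tauto
        have e2 : (X ∩ Y) ∪ S ⊆ (X ∪ S) ∩ (Y ∪ S ∪ F₀) := by
          intro z hz
          simp only [Finset.mem_inter, Finset.mem_union] at hz ⊢; tauto
        have h3 : f ((X ∩ Y) ∪ S) ≤ f ((X ∪ S) ∩ (Y ∪ S ∪ F₀)) :=
          hfmono _ _ e2 (fun z hz => (Finset.union_subset hXM hSM) (Finset.mem_inter.1 hz).1)
        rw [e1] at hsubm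
        linarith
    intro X Y hXM hYM
    rcases le_total (f (X ∪ S) + δr) (𝓕.inf' hne fun F => f (X ∪ S ∪ F)) with hcX | hcX
    · exact N1 X Y hXM hYM (min_eq_left hcX)
    · rcases le_total (f (Y ∪ S) + δr) (𝓕.inf' hne fun F => f (Y ∪ S ∪ F)) with hcY | hcY
      · have := N1 Y X hYM hXM (min_eq_left hcY)
        rw [Finset.union_comm Y X, Finset.inter_comm Y X] at this
        linarith
      · -- both attain the cut branch
        obtain ⟨F₀, hF₀, hEqX⟩ := Finset.exists_mem_eq_inf' hne (fun F => f (X ∪ S ∪ F))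
        obtain ⟨G₀, hG₀, hEqY⟩ := Finset.exists_mem_eq_inf' hne (fun F => f (Y ∪ S ∪ F))
        have hX1 : hh X = f (X ∪ S ∪ F₀) := by
          simp only [hhdef]; rw [min_eq_right hcX, hEqX]
        have hY1 : hh Y = f (Y ∪ S ∪ G₀) := by
          simp only [hhdef]; rw [min_eq_right hcY, hEqY]
        have hXSF : X ∪ S ∪ F₀ ⊆ M :=
          Finset.union_subset (Finset.union_subset hXM hSM) (h𝓕 F₀ hF₀).2
        have hYSG : Y ∪ S ∪ G₀ ⊆ M :=
          Finset.union_subset (Finset.union_subset hYM hSM) (h𝓕 G₀ hG₀).2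
        obtain ⟨hsupF, hFM', hFrank, hFflat⟩ := Statement17Aux.clo_spec M f hf _ hXSF
        obtain ⟨hsupG, hGM', hGrank, hGflat⟩ := Statement17Aux.clo_spec M f hf _ hYSG
        set F' := Statement17Aux.clo M f (X ∪ S ∪ F₀) with hF'def
        set G' := Statement17Aux.clo M f (Y ∪ S ∪ G₀) with hG'def
        have hF'𝓜 : F' ∈ 𝓜 := h𝓜.2.1 F₀ (h𝓕 F₀ hF₀).1 F' hFflat
          (Finset.Subset.trans Finset.subset_union_right hsupF)
        have hG'𝓜 : G' ∈ 𝓜 := h𝓜.2.1 G₀ (h𝓕 G₀ hG₀).1 G' hGflat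
          (Finset.Subset.trans Finset.subset_union_right hsupG)
        have hXF' : X ⊆ F' :=
          (Finset.subset_union_left.trans Finset.subset_union_left).trans hsupF
        have hSF' : S ⊆ F' :=
          (Finset.subset_union_right.trans Finset.subset_union_left).trans hsupF
        have hYG' : Y ⊆ G' :=
          (Finset.subset_union_left.trans Finset.subset_union_left).trans hsupG
        have hSG' : S ⊆ G' :=
          (Finset.subset_union_right.trans Finset.subset_union_left).trans hsupG
        have hbu : hh (X ∪ Y) ≤ f (F' ∪ G') := by
          refine le_trans (hhub2 (X ∪ Y) F₀ hF₀) (hfmono _ _ ?_ (Finset.union_subset hFM' hGM'))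
          intro z hz
          simp only [Finset.mem_union] at hz ⊢
          rcases hz with ((hz | hz) | hz) | hz
          · exact Or.inl (hXF' hz)
          · exact Or.inr (hYG' hz)
          · exact Or.inl (hSF' hz)
          · exact Or.inl (hsupF (Finset.mem_union_right _ hz))
        have hsubm := hfsub F' G' hFM' hGM'
        by_cases hFG : F' ∩ G' ∈ 𝓜
        · have hbi : hh (X ∩ Y) ≤ f (F' ∩ G') := by
            refine le_trans (hhub2 (X ∩ Y) (F' ∩ G') (h𝓕mem _ hFG))
              (hfmono _ _ ?_ (fun z hz => hFM' (Finset.mem_inter.1 hz).1))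
            intro z hz
            simp only [Finset.mem_union, Finset.mem_inter] at hz ⊢
            rcases hz with (⟨h1, h2⟩ | hz) | hz
            · exact ⟨hXF' h1, hYG' h2⟩
            · exact ⟨hSF' hz, hSG' hz⟩
            · exact hz
          linarith
        · have hd := hmin F' hF'𝓜 G' hG'𝓜 hFG
          rw [modularDefect] at hd
          have hbi : hh (X ∩ Y) ≤ f (F' ∩ G') + δr := by
            refine le_trans (hhub1 (X ∩ Y)) (add_le_add_left (hfmono _ _ ?_
              (fun z hz => hFM' (Finset.mem_inter.1 hz).1)) _)
            intro z hz
            simp only [Finset.mem_union, Finset.mem_inter] at hz ⊢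
            rcases hz with ⟨h1, h2⟩ | hz
            · exact ⟨hXF' h1, hYG' h2⟩
            · exact ⟨hSF' hz, hSG' hz⟩
          linarith
  -- strict lower bound (G4)
  have hG4 : ∀ X : Finset α, X ⊆ M → f X + (f S + δr) < 2 * hh X := by
    intro X hXM
    have hXSM : X ∪ S ⊆ M := Finset.union_subset hXM hSM
    rcases le_total (f (X ∪ S) + δr) (𝓕.inf' hne fun F => f (X ∪ S ∪ F)) with hc | hc
    · have hX1 : hh X = f (X ∪ S) + δr := min_eq_left hc
      have h1 : f X ≤ f (X ∪ S) := hfmono _ _ Finset.subset_union_left hXSM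
      have h2 : f S ≤ f (X ∪ S) := hfmono _ _ Finset.subset_union_right hXSM
      rw [hX1]; linarith [hδpos]
    · obtain ⟨F₀, hF₀, hEq⟩ := Finset.exists_mem_eq_inf' hne (fun F => f (X ∪ S ∪ F))
      have hX1 : hh X = f (X ∪ S ∪ F₀) := by
        simp only [hhdef]; rw [min_eq_right hc, hEq]
      have hXSF : X ∪ S ∪ F₀ ⊆ M :=
        Finset.union_subset hXSM (h𝓕 F₀ hF₀).2
      have h1 : f X ≤ f (X ∪ S ∪ F₀) :=
        hfmono _ _ (Finset.subset_union_left.trans Finset.subset_union_left) hXSF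
      have h2 : f (S ∪ F₀) ≤ f (X ∪ S ∪ F₀) := by
        refine hfmono _ _ ?_ hXSF
        intro z hz
        simp only [Finset.mem_union] at hz ⊢; tauto
      have h3 : f S + δr ≤ f (S ∪ F₀) := hK F₀ hF₀
      rw [hX1]
      by_contra hcon
      push_neg at hcon
      have hφ : f (X ∪ S ∪ F₀) = f S + δr := by linarith
      obtain ⟨hsupW, hWM', hWrank, hWflat⟩ := Statement17Aux.clo_spec M f hf _ hXSF
      have hW𝓜 : Statement17Aux.clo M f (X ∪ S ∪ F₀) ∈ 𝓜 :=
        h𝓜.2.1 F₀ (h𝓕 F₀ hF₀).1 _ hWflat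
          (Finset.Subset.trans Finset.subset_union_right hsupW)
      exact hK2 _ hW𝓜
        ((Finset.subset_union_right.trans Finset.subset_union_left).trans hsupW)
        (by rw [hWrank]; exact hφ)
  -- hh values at the four special sets
  have eF₁S : F₁ ∪ S = F₁ := Finset.union_eq_left.2 hS₁
  have eF₂S : F₂ ∪ S = F₂ := Finset.union_eq_left.2 hS₂
  have eUS : (F₁ ∪ F₂) ∪ S = F₁ ∪ F₂ :=
    Finset.union_eq_left.2 (hS₁.trans Finset.subset_union_left)
  have hhF₁ : hh F₁ = f F₁ := by
    apply le_antisymm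
    · refine le_trans (hhub2 F₁ F₁ (Finset.mem_insert_self _ _)) (le_of_eq ?_)
      congr 1
      rw [eF₁S, Finset.union_self]
    · exact hhgef F₁ hF₁M
  have hhF₂ : hh F₂ = f F₂ := by
    apply le_antisymm
    · refine le_trans (hhub2 F₂ F₂ hF₂𝓕) (le_of_eq ?_)
      congr 1
      rw [eF₂S, Finset.union_self]
    · exact hhgef F₂ hF₂M
  have hhU : hh (F₁ ∪ F₂) = f (F₁ ∪ F₂) := by
    apply le_antisymm
    · refine le_trans (hhub2 (F₁ ∪ F₂) F₁ (Finset.mem_insert_self _ _)) (le_of_eq ?_)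
      congr 1
      rw [eUS]
      exact Finset.union_eq_left.2 Finset.subset_union_left
    · exact hhgef _ hUM
  have hhS : hh S = f S + δr := by
    simp only [hhdef, Finset.union_self]
    apply min_eq_left
    apply Finset.le_inf'
    intro F hF
    exact hK F hF
  -- the constant ε
  set ε : ℝ := (M.powerset).inf' (show (M.powerset).Nonempty from ⟨∅, Finset.empty_mem_powerset M⟩)
    (fun X => 2 * hh X - f X - (f S + δr)) with hεdef
  have hεpos : 0 < ε := by
    rw [hεdef]
    rw [Finset.lt_inf'_iff]
    intro X hX
    have := hG4 X (Finset.mem_powerset.1 hX)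
    linarith
  have hεle : ∀ X : Finset α, X ⊆ M → ε ≤ 2 * hh X - f X - (f S + δr) := by
    intro X hXM
    exact Finset.inf'_le _ (Finset.mem_powerset.2 hXM)
  -- the extension data
  set gt : Finset α → ℝ := fun X => f M + hh X with hgtdef
  set c : ℝ := 2 * f M + (f S + δr) + ε with hcdef
  have hfM : (0:ℝ) ≤ f M := hfnn M Finset.Subset.rfl
  have A2 : ∀ X Y : Finset α, X ⊆ Y → Y ⊆ M → gt X ≤ gt Y := by
    intro X Y h1 h2
    have := hhmono X Y h1 h2
    simp only [hgtdef]
    linarith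
  have A3 : ∀ X Y : Finset α, X ⊆ M → Y ⊆ M → gt (X ∪ Y) + gt (X ∩ Y) ≤ gt X + gt Y := by
    intro X Y h1 h2
    have := hhsub X Y h1 h2
    simp only [hgtdef]
    linarith
  have A4 : ∀ X Y : Finset α, X ⊆ M → Y ⊆ M → gt (X ∪ Y) + f (X ∩ Y) ≤ gt Y + f X := by
    intro X Y h1 h2
    have := hhcross X Y h1 h2
    simp only [hgtdef]
    linarith
  have A5 : ∀ X : Finset α, X ⊆ M → f X ≤ gt X := by
    intro X h1
    have := hhgef X h1
    simp only [hgtdef]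
    linarith
  have A6 : ∀ X : Finset α, X ⊆ M → gt X ≤ c := by
    intro X h1
    have h2 : hh X ≤ f (X ∪ S) + δr := hhub1 X
    have h3 : f (X ∪ S) ≤ f M :=
      hfmono _ _ (Finset.union_subset h1 hSM) Finset.Subset.rfl
    have h4 : (0:ℝ) ≤ f S := hfnn S hSM
    simp only [hgtdef, hcdef]
    linarith
  have A7 : ∀ X Y : Finset α, X ⊆ M → Y ⊆ M → c + f (X ∩ Y) ≤ gt X + gt Y := by
    intro X Y h1 h2
    have hXYM : X ∩ Y ⊆ M := fun z hz => h1 (Finset.mem_inter.1 hz).1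
    have h3 := hεle (X ∩ Y) hXYM
    have h4 : hh (X ∩ Y) ≤ hh X := hhmono _ _ Finset.inter_subset_left h1
    have h5 : hh (X ∩ Y) ≤ hh Y := hhmono _ _ Finset.inter_subset_right h2
    simp only [hgtdef, hcdef]
    linarith
  -- assemble
  refine ⟨u, v, huv, hu, hv, Statement17Aux.twoExt M f gt c u v,
    Statement17Aux.twoExt_poly M f gt c u v hf A2 A3 A4 A5 A6 A7, ?_, ?_⟩
  · intro A hA
    rw [Statement17Aux.twoExt_val0 M f gt c u v (fun h => hu (hA h)) (fun h => hv (hA h)),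
      Finset.inter_eq_left.2 hA]
  · -- the Ingleton computation
    have hrestrict : ∀ A : Finset α, A ⊆ M → Statement17Aux.twoExt M f gt c u v A = f A := by
      intro A hA
      rw [Statement17Aux.twoExt_val0 M f gt c u v (fun h => hu (hA h)) (fun h => hv (hA h)),
        Finset.inter_eq_left.2 hA]
    have hvalu : ∀ W : Finset α, W ⊆ M →
        Statement17Aux.twoExt M f gt c u v (W ∪ ({u} ∪ S)) = gt (W ∪ S) := by
      intro W hW
      have hum : u ∈ W ∪ ({u} ∪ S) := by
        simp only [Finset.mem_union, Finset.mem_singleton]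
        tauto
      have hvm : v ∉ W ∪ ({u} ∪ S) := by
        simp only [Finset.mem_union, Finset.mem_singleton]
        rintro (h | h | h)
        · exact hv (hW h)
        · exact huv h.symm
        · exact hv (hSM h)
      rw [Statement17Aux.twoExt_val1 M f gt c u v (Or.inl hum) (fun h => hvm h.2)]
      congr 1
      ext z
      simp only [Finset.mem_inter, Finset.mem_union, Finset.mem_singleton]
      constructor
      · rintro ⟨h | h | h, hzM⟩
        · exact Or.inl h
        · exact absurd (h ▸ hzM) hu
        · exact Or.inr h
      · rintro (h | h)
        · exact ⟨Or.inl h, hW h⟩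
        · exact ⟨Or.inr (Or.inr h), hSM h⟩
    have hvalv : ∀ W : Finset α, W ⊆ M →
        Statement17Aux.twoExt M f gt c u v (W ∪ ({v} ∪ S)) = gt (W ∪ S) := by
      intro W hW
      have hvm : v ∈ W ∪ ({v} ∪ S) := by
        simp only [Finset.mem_union, Finset.mem_singleton]
        tauto
      have hum : u ∉ W ∪ ({v} ∪ S) := by
        simp only [Finset.mem_union, Finset.mem_singleton]
        rintro (h | h | h)
        · exact hu (hW h)
        · exact huv h
        · exact hu (hSM h)
      rw [Statement17Aux.twoExt_val1 M f gt c u v (Or.inr hvm) (fun h => hum h.1)]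
      congr 1
      ext z
      simp only [Finset.mem_inter, Finset.mem_union, Finset.mem_singleton]
      constructor
      · rintro ⟨h | h | h, hzM⟩
        · exact Or.inl h
        · exact absurd (h ▸ hzM) hv
        · exact Or.inr h
      · rintro (h | h)
        · exact ⟨Or.inl h, hW h⟩
        · exact ⟨Or.inr (Or.inr h), hSM h⟩
    have hvalu0 : Statement17Aux.twoExt M f gt c u v ({u} ∪ S) = gt S := by
      have hum : u ∈ {u} ∪ S := Finset.mem_union_left _ (Finset.mem_singleton_self u)
      have hvm : v ∉ {u} ∪ S := by
        simp only [Finset.mem_union, Finset.mem_singleton]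
        rintro (h | h)
        · exact huv h.symm
        · exact hv (hSM h)
      rw [Statement17Aux.twoExt_val1 M f gt c u v (Or.inl hum) (fun h => hvm h.2)]
      congr 1
      ext z
      simp only [Finset.mem_inter, Finset.mem_union, Finset.mem_singleton]
      constructor
      · rintro ⟨h | h, hzM⟩
        · exact absurd (h ▸ hzM) hu
        · exact h
      · intro h
        exact ⟨Or.inr h, hSM h⟩
    have hvalv0 : Statement17Aux.twoExt M f gt c u v ({v} ∪ S) = gt S := by
      have hvm : v ∈ {v} ∪ S := Finset.mem_union_left _ (Finset.mem_singleton_self v)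
      have hum : u ∉ {v} ∪ S := by
        simp only [Finset.mem_union, Finset.mem_singleton]
        rintro (h | h)
        · exact huv h
        · exact hu (hSM h)
      rw [Statement17Aux.twoExt_val1 M f gt c u v (Or.inr hvm) (fun h => hum h.1)]
      congr 1
      ext z
      simp only [Finset.mem_inter, Finset.mem_union, Finset.mem_singleton]
      constructor
      · rintro ⟨h | h, hzM⟩
        · exact absurd (h ▸ hzM) hv
        · exact h
      · intro h
        exact ⟨Or.inr h, hSM h⟩
    have hvaluv : Statement17Aux.twoExt M f gt c u v ({u} ∪ {v} ∪ S) = c := by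
      apply Statement17Aux.twoExt_val2
      · simp only [Finset.mem_union, Finset.mem_singleton]
        tauto
      · simp only [Finset.mem_union, Finset.mem_singleton]
        tauto
    have rA : Statement17Aux.twoExt M f gt c u v (F₁ ∪ S) = f F₁ := by
      rw [eF₁S]; exact hrestrict F₁ hF₁M
    have rB : Statement17Aux.twoExt M f gt c u v (F₂ ∪ S) = f F₂ := by
      rw [eF₂S]; exact hrestrict F₂ hF₂M
    have rC : Statement17Aux.twoExt M f gt c u v S = f S := hrestrict S hSM
    have rD : Statement17Aux.twoExt M f gt c u v (F₁ ∪ F₂ ∪ S) = f (F₁ ∪ F₂) := by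
      rw [eUS]; exact hrestrict _ hUM
    have rE : Statement17Aux.twoExt M f gt c u v (F₁ ∪ ({u} ∪ S)) = gt F₁ := by
      rw [hvalu F₁ hF₁M, eF₁S]
    have rF : Statement17Aux.twoExt M f gt c u v (F₂ ∪ ({u} ∪ S)) = gt F₂ := by
      rw [hvalu F₂ hF₂M, eF₂S]
    have rH : Statement17Aux.twoExt M f gt c u v (F₁ ∪ F₂ ∪ ({u} ∪ S)) = gt (F₁ ∪ F₂) := by
      rw [hvalu _ hUM, eUS]
    have rE' : Statement17Aux.twoExt M f gt c u v (F₁ ∪ ({v} ∪ S)) = gt F₁ := by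
      rw [hvalv F₁ hF₁M, eF₁S]
    have rF' : Statement17Aux.twoExt M f gt c u v (F₂ ∪ ({v} ∪ S)) = gt F₂ := by
      rw [hvalv F₂ hF₂M, eF₂S]
    have rH' : Statement17Aux.twoExt M f gt c u v (F₁ ∪ F₂ ∪ ({v} ∪ S)) = gt (F₁ ∪ F₂) := by
      rw [hvalv _ hUM, eUS]
    have gA : gt F₁ = f M + f F₁ := by simp only [hgtdef]; rw [hhF₁]
    have gB : gt F₂ = f M + f F₂ := by simp only [hgtdef]; rw [hhF₂]
    have gU : gt (F₁ ∪ F₂) = f M + f (F₁ ∪ F₂) := by simp only [hgtdef]; rw [hhU]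
    have gS : gt S = f M + (f S + δr) := by simp only [hgtdef]; rw [hhS]
    simp only [ingExprCond, condMI]
    rw [rA, rB, rC, rD, rE, rF, rH, rE', rF', rH', hvalu0, hvalv0, hvaluv,
      gA, gB, gU, gS, hcdef]
    linarith [hεpos, hδeq]
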